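/- Let N ≥ 1, let Q be a real symmetric positive definite N×N matrix, let B be a real N×N matrix, let s > 0 and T > 0, and set Ψ(t,ξ) = ∫₀ᵗ ‖Q^{1/2} exp(τ Bᵀ) ξ‖^{2s} dτ. Then there exists a constant c ∈ (0,1] (depending only on s, T, Q, B) such that for every v ∈ L²(ℝᴺ; ℂ) and every t ∈ [0,T]: ‖ exp(−Ψ(t,·)) v ‖_{L²(ℝᴺ)} ≤ ‖v‖_{L²(ℝᴺ)}^{1 − c t/T} · ‖ exp(−Ψ(T,·)) v ‖_{L²(ℝᴺ)}^{c t/T}. -/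

import Mathlib

set_option maxHeartbeats 1000000


open MeasureTheory Matrix NormedSpace intervalIntegral

/-- The Euclidean norm of a vector in `ℝᴺ`. -/
noncomputable def euclNorm {N : ℕ} (x : Fin N → ℝ) : ℝ :=
  Real.sqrt (∑ i, (x i) ^ 2)

/-- The square root of a positive semidefinite matrix, as `Matrix.PosSemidef.sqrt` was defined in
older Mathlib. -/
noncomputable def posSemidefSqrt {n : Type*} [Fintype n] [DecidableEq n]
    {A : Matrix n n ℝ} (hA : A.PosSemidef) : Matrix n n ℝ :=
  hA.1.eigenvectorUnitary.1 * diagonal ((↑) ∘ (√·) ∘ hA.1.eigenvalues) *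
    (star hA.1.eigenvectorUnitary : Matrix n n ℝ)

/-- `Ψ(t,ξ) = ∫₀ᵗ ‖Q^{1/2} e^{τ Bᵀ} ξ‖^{2s} dτ`. -/
noncomputable def PsiFun {N : ℕ} (Q B : Matrix (Fin N) (Fin N) ℝ) (hQ : Q.PosDef)
    (s : ℝ) (t : ℝ) (ξ : Fin N → ℝ) : ℝ :=
  ∫ τ in (0:ℝ)..t, euclNorm ((posSemidefSqrt hQ.posSemidef).mulVec ((exp (τ • Bᵀ)).mulVec ξ)) ^ (2 * s)

section Aux

open scoped Matrix.Norms.L2Operator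

variable {N : ℕ}

lemma euclNorm_eq (x : Fin N → ℝ) :
    euclNorm x = ‖(EuclideanSpace.equiv (Fin N) ℝ).symm x‖ := by
  rw [EuclideanSpace.norm_eq]
  simp [euclNorm, Real.norm_eq_abs, sq_abs]

lemma euclNorm_nonneg (x : Fin N → ℝ) : 0 ≤ euclNorm x := Real.sqrt_nonneg _

lemma continuous_euclNorm : Continuous (euclNorm (N := N)) :=
  (continuous_finset_sum _ fun i _ => (continuous_apply i).pow 2).sqrt

lemma euclNorm_mulVec_le (A : Matrix (Fin N) (Fin N) ℝ) (x : Fin N → ℝ) :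
    euclNorm (A.mulVec x) ≤ ‖A‖ * euclNorm x := by
  have h := A.l2_opNorm_mulVec ((EuclideanSpace.equiv (Fin N) ℝ).symm x)
  rw [euclNorm_eq, euclNorm_eq]
  simpa using h

lemma continuous_mulVec_left (ξ : Fin N → ℝ) :
    Continuous fun M : Matrix (Fin N) (Fin N) ℝ => M.mulVec ξ :=
  ({ toFun := fun M : Matrix (Fin N) (Fin N) ℝ => M.mulVec ξ
     map_add' := fun M M' => Matrix.add_mulVec M M' ξ
     map_smul' := fun r M => (Matrix.smul_mulVec r M ξ) } :
     Matrix (Fin N) (Fin N) ℝ →ₗ[ℝ] (Fin N → ℝ)).continuous_of_finiteDimensional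

lemma continuous_entry (i j : Fin N) :
    Continuous fun M : Matrix (Fin N) (Fin N) ℝ => M i j :=
  ({ toFun := fun M : Matrix (Fin N) (Fin N) ℝ => M i j
     map_add' := fun _ _ => rfl
     map_smul' := fun _ _ => rfl } :
     Matrix (Fin N) (Fin N) ℝ →ₗ[ℝ] ℝ).continuous_of_finiteDimensional

lemma posSemidefSqrt_mul_self {N : ℕ} {Q : Matrix (Fin N) (Fin N) ℝ} (hQ : Q.PosSemidef) :
    posSemidefSqrt hQ * posSemidefSqrt hQ = Q := by
  have hU : (star hQ.1.eigenvectorUnitary : Matrix (Fin N) (Fin N) ℝ) * hQ.1.eigenvectorUnitary.1 = 1 :=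
    Unitary.coe_star_mul_self _
  have hD : diagonal (((↑) ∘ (√·) ∘ hQ.1.eigenvalues : Fin N → ℝ)) *
      diagonal (((↑) ∘ (√·) ∘ hQ.1.eigenvalues : Fin N → ℝ)) =
      diagonal (RCLike.ofReal ∘ hQ.1.eigenvalues) := by
    rw [diagonal_mul_diagonal]
    congr 1; funext i
    simp [Real.mul_self_sqrt (hQ.eigenvalues_nonneg i)]
  conv_rhs => rw [hQ.1.spectral_theorem]
  simp only [posSemidefSqrt, Unitary.conjStarAlgAut_apply]
  calc _ = hQ.1.eigenvectorUnitary.1 * (diagonal ((↑) ∘ (√·) ∘ hQ.1.eigenvalues) *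
      ((star hQ.1.eigenvectorUnitary : Matrix (Fin N) (Fin N) ℝ) * hQ.1.eigenvectorUnitary.1) *
      diagonal ((↑) ∘ (√·) ∘ hQ.1.eigenvalues)) * (star hQ.1.eigenvectorUnitary : Matrix (Fin N) (Fin N) ℝ) := by
        simp only [Matrix.mul_assoc]
    _ = _ := by rw [hU, Matrix.mul_one, hD]

/-- Fourier-side logarithmic convexity: for every `v ∈ L²(ℝᴺ;ℂ)` and `t ∈ [0,T]`,
`‖e^{−Ψ(t,·)} v‖₂ ≤ ‖v‖₂^{1−ct/T} ‖e^{−Ψ(T,·)} v‖₂^{ct/T}`. -/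
theorem stmt3 (N : ℕ) (hN : 1 ≤ N) (Q B : Matrix (Fin N) (Fin N) ℝ)
    (hQ : Q.PosDef) (s T : ℝ) (hs : 0 < s) (hT : 0 < T) :
    ∃ c : ℝ, c ∈ Set.Ioc (0 : ℝ) 1 ∧
      ∀ v : (Fin N → ℝ) → ℂ, MemLp v 2 (volume : Measure (Fin N → ℝ)) →
        ∀ t ∈ Set.Icc (0 : ℝ) T,
          (∫ ξ, ‖Real.exp (-(PsiFun Q B hQ s t ξ)) • v ξ‖ ^ 2) ^ ((1:ℝ)/2) ≤
            ((∫ ξ, ‖v ξ‖ ^ 2) ^ ((1:ℝ)/2)) ^ (1 - c * t / T) *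
              ((∫ ξ, ‖Real.exp (-(PsiFun Q B hQ s T ξ)) • v ξ‖ ^ 2) ^ ((1:ℝ)/2)) ^
                (c * t / T) := by
  classical
  set R : Matrix (Fin N) (Fin N) ℝ := posSemidefSqrt hQ.posSemidef with hR
  -- R is invertible
  have hRdet : IsUnit R.det := by
    have h2 : R * R = Q := posSemidefSqrt_mul_self hQ.posSemidef
    have : R.det * R.det = Q.det := by rw [← Matrix.det_mul, h2]
    have hQd : Q.det ≠ 0 := ne_of_gt hQ.det_pos
    refine isUnit_iff_ne_zero.2 fun h0 => hQd ?_
    rw [← this, h0, mul_zero]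
  have hRinv : R⁻¹ * R = 1 := Matrix.nonsing_inv_mul R hRdet
  set F : ℝ → Matrix (Fin N) (Fin N) ℝ := fun τ => R * exp (τ • Bᵀ) with hF
  set G : ℝ → Matrix (Fin N) (Fin N) ℝ := fun τ => exp (-(τ • Bᵀ)) * R⁻¹ with hG
  have hGF : ∀ τ, G τ * F τ = 1 := by
    intro τ
    have e1 : exp (-(τ • Bᵀ)) * exp (τ • Bᵀ) = 1 := by
      rw [← Matrix.exp_add_of_commute _ _ ((Commute.refl (τ • Bᵀ)).neg_left), neg_add_cancel,
        exp_zero]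
    calc G τ * F τ = exp (-(τ • Bᵀ)) * (R⁻¹ * R) * exp (τ • Bᵀ) := by
          simp only [hG, hF]; noncomm_ring
      _ = 1 := by rw [hRinv, mul_one, e1]
  have hexpc : Continuous (exp : Matrix (Fin N) (Fin N) ℝ → _) := by
    letI : NormedAlgebra ℚ (Matrix (Fin N) (Fin N) ℝ) := NormedAlgebra.restrictScalars ℚ ℝ _
    exact exp_continuous
  have hFc : Continuous F :=
    continuous_const.mul (hexpc.comp (continuous_id.smul continuous_const))
  have hGc : Continuous G :=
    (hexpc.comp ((continuous_id.smul continuous_const).neg)).mul continuous_const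
  obtain ⟨τF, hτF, hMF'⟩ := isCompact_Icc.exists_isMaxOn (Set.nonempty_Icc.2 hT.le)
    (continuous_norm.comp hFc).continuousOn
  obtain ⟨τG, hτG, hMG'⟩ := isCompact_Icc.exists_isMaxOn (Set.nonempty_Icc.2 hT.le)
    (continuous_norm.comp hGc).continuousOn
  have hMF : ∀ τ ∈ Set.Icc (0:ℝ) T, ‖F τ‖ ≤ ‖F τF‖ := fun τ hτ => hMF' hτ
  have hMG : ∀ τ ∈ Set.Icc (0:ℝ) T, ‖G τ‖ ≤ ‖G τG‖ := fun τ hτ => hMG' hτ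
  set MF : ℝ := ‖F τF‖ with hMFdef
  set MG : ℝ := ‖G τG‖ with hMGdef
  have hup : ∀ τ ∈ Set.Icc (0:ℝ) T, ∀ ξ, euclNorm ((F τ).mulVec ξ) ≤ MF * euclNorm ξ := by
    intro τ hτ ξ
    refine (euclNorm_mulVec_le _ _).trans ?_
    exact mul_le_mul_of_nonneg_right (hMF τ hτ) (euclNorm_nonneg _)
  have hlow : ∀ τ ∈ Set.Icc (0:ℝ) T, ∀ ξ, euclNorm ξ ≤ MG * euclNorm ((F τ).mulVec ξ) := by
    intro τ hτ ξ
    have : euclNorm ξ = euclNorm ((G τ).mulVec ((F τ).mulVec ξ)) := by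
      rw [Matrix.mulVec_mulVec, hGF, Matrix.one_mulVec]
    rw [this]
    refine (euclNorm_mulVec_le _ _).trans ?_
    exact mul_le_mul_of_nonneg_right (hMG τ hτ) (euclNorm_nonneg _)
  -- a nonzero vector
  set ξ₀ : Fin N → ℝ := Pi.single (⟨0, hN⟩ : Fin N) (1:ℝ) with hξ₀
  have hξ₀n : euclNorm ξ₀ = 1 := by
    rw [euclNorm]
    rw [show (∑ i, (ξ₀ i) ^ 2) = 1 by
      rw [hξ₀, Finset.sum_eq_single (⟨0, hN⟩ : Fin N)]
      · simp
      · intro b _ hb; simp [Pi.single_apply, hb]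
      · simp]
    exact Real.sqrt_one
  have hT0 : (0:ℝ) ∈ Set.Icc (0:ℝ) T := ⟨le_refl _, hT.le⟩
  have hMG0 : 0 < MG := by
    have h1 := hlow 0 hT0 ξ₀
    rw [hξ₀n] at h1
    nlinarith [euclNorm_nonneg ((F 0).mulVec ξ₀)]
  have hMF0 : 0 < MF := by
    have h1 := hlow 0 hT0 ξ₀
    have h2 := hup 0 hT0 ξ₀
    rw [hξ₀n] at h1 h2
    nlinarith [euclNorm_nonneg ((F 0).mulVec ξ₀)]
  -- the constant
  set c₀ : ℝ := (MF * MG) ^ (-(2 * s)) with hc₀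
  have hc₀pos : 0 < c₀ := Real.rpow_pos_of_pos (mul_pos hMF0 hMG0) _
  set c : ℝ := min c₀ 1 / 2 with hc
  have hcpos : 0 < c := by
    rw [hc]; have := lt_min hc₀pos one_pos; linarith
  have hcle : c ≤ 1 / 2 := by
    rw [hc]; gcongr; exact min_le_right _ _
  have hcc₀ : c ≤ c₀ := by
    rw [hc]
    calc min c₀ 1 / 2 ≤ c₀ / 2 := by gcongr; exact min_le_left _ _
      _ ≤ c₀ := by linarith
  -- integrand rewriting and continuity
  have hPsi_eq : ∀ t ξ, PsiFun Q B hQ s t ξ =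
      ∫ τ in (0:ℝ)..t, euclNorm ((F τ).mulVec ξ) ^ (2 * s) := by
    intro t ξ
    simp only [PsiFun, hF, ← Matrix.mulVec_mulVec, hR]
  have hcι : ∀ ξ, Continuous fun τ : ℝ => euclNorm ((F τ).mulVec ξ) ^ (2 * s) := by
    intro ξ
    exact ((continuous_euclNorm.comp ((continuous_mulVec_left ξ).comp hFc)).rpow_const
      (fun x => Or.inr (by linarith)))
  -- lower bound on Ψ(t)
  have hΨ_low : ∀ t ∈ Set.Icc (0:ℝ) T, ∀ ξ,
      t * (euclNorm ξ / MG) ^ (2 * s) ≤ PsiFun Q B hQ s t ξ := by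
    intro t ht ξ
    rw [hPsi_eq]
    have h1 : ∫ _τ in (0:ℝ)..t, (euclNorm ξ / MG) ^ (2 * s) =
        t * (euclNorm ξ / MG) ^ (2 * s) := by
      rw [intervalIntegral.integral_const]; simp [smul_eq_mul]
    rw [← h1]
    refine intervalIntegral.integral_mono_on ht.1 (intervalIntegrable_const)
      ((hcι ξ).intervalIntegrable _ _) ?_
    intro τ hτ
    have hτT : τ ∈ Set.Icc (0:ℝ) T := ⟨hτ.1, hτ.2.trans ht.2⟩
    refine Real.rpow_le_rpow (div_nonneg (euclNorm_nonneg ξ) hMG0.le) ?_ (by linarith)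
    rw [div_le_iff₀ hMG0]
    calc euclNorm ξ ≤ MG * euclNorm ((F τ).mulVec ξ) := hlow τ hτT ξ
      _ = euclNorm ((F τ).mulVec ξ) * MG := mul_comm _ _
  -- upper bound on Ψ(T)
  have hΨ_up : ∀ ξ, PsiFun Q B hQ s T ξ ≤ T * (MF * euclNorm ξ) ^ (2 * s) := by
    intro ξ
    rw [hPsi_eq]
    have h1 : ∫ _τ in (0:ℝ)..T, (MF * euclNorm ξ) ^ (2 * s) =
        T * (MF * euclNorm ξ) ^ (2 * s) := by
      rw [intervalIntegral.integral_const]; simp [smul_eq_mul]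
    rw [← h1]
    refine intervalIntegral.integral_mono_on hT.le ((hcι ξ).intervalIntegrable _ _)
      (intervalIntegrable_const) ?_
    intro τ hτ
    exact Real.rpow_le_rpow (euclNorm_nonneg _) (hup τ hτ ξ) (by linarith)
  have hΨ_nonneg : ∀ t ∈ Set.Icc (0:ℝ) T, ∀ ξ, 0 ≤ PsiFun Q B hQ s t ξ := by
    intro t ht ξ
    rw [hPsi_eq]
    exact intervalIntegral.integral_nonneg ht.1
      (fun τ _ => Real.rpow_nonneg (euclNorm_nonneg _) _)
  -- the key comparison
  have hKey : ∀ t ∈ Set.Icc (0:ℝ) T, ∀ ξ,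
      (c * t / T) * PsiFun Q B hQ s T ξ ≤ PsiFun Q B hQ s t ξ := by
    intro t ht ξ
    have hrpow : c₀ * (MF * euclNorm ξ) ^ (2 * s) = (euclNorm ξ / MG) ^ (2 * s) := by
      rw [hc₀, Real.rpow_neg (mul_pos hMF0 hMG0).le, inv_mul_eq_div,
        ← Real.div_rpow (mul_nonneg hMF0.le (euclNorm_nonneg ξ)) (mul_pos hMF0 hMG0).le,
        mul_div_mul_left _ _ (ne_of_gt hMF0)]
    have e1 : (c * t / T) * PsiFun Q B hQ s T ξ ≤
        (c₀ * t / T) * (T * (MF * euclNorm ξ) ^ (2 * s)) := by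
      have h1 : PsiFun Q B hQ s T ξ ≤ T * (MF * euclNorm ξ) ^ (2 * s) := hΨ_up ξ
      have h2 : 0 ≤ PsiFun Q B hQ s T ξ := hΨ_nonneg T ⟨hT.le, le_refl _⟩ ξ
      have h3 : c * t / T ≤ c₀ * t / T := by
        rw [div_le_div_iff₀ hT hT]
        nlinarith [mul_nonneg (mul_nonneg (sub_nonneg.2 hcc₀) ht.1) hT.le]
      calc (c * t / T) * PsiFun Q B hQ s T ξ ≤ (c₀ * t / T) * PsiFun Q B hQ s T ξ :=
            mul_le_mul_of_nonneg_right h3 h2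
        _ ≤ (c₀ * t / T) * (T * (MF * euclNorm ξ) ^ (2 * s)) := by
            exact mul_le_mul_of_nonneg_left h1
              (div_nonneg (mul_nonneg hc₀pos.le ht.1) hT.le)
    have e2 : (c₀ * t / T) * (T * (MF * euclNorm ξ) ^ (2 * s)) =
        t * (euclNorm ξ / MG) ^ (2 * s) := by
      rw [← hrpow]
      field_simp
    exact e1.trans_eq e2 |>.trans (hΨ_low t ht ξ)
  -- measurability of Ψ(t, ·)
  have hΨmeas : ∀ t, 0 ≤ t → Measurable fun ξ => PsiFun Q B hQ s t ξ := by
    intro t ht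
    have hgc : Continuous fun p : (Fin N → ℝ) × ℝ => euclNorm ((F p.2).mulVec p.1) ^ (2 * s) := by
      have h1 : Continuous fun p : (Fin N → ℝ) × ℝ => (F p.2).mulVec p.1 := by
        refine continuous_pi fun i => ?_
        have : ∀ p : (Fin N → ℝ) × ℝ, (F p.2).mulVec p.1 i = ∑ j, F p.2 i j * p.1 j := by
          intro p; rfl
        simp only [this]
        exact continuous_finset_sum _ fun j _ =>
          ((continuous_entry i j).comp (hFc.comp continuous_snd)).mul
            ((continuous_apply j).comp continuous_fst)
      exact (continuous_euclNorm.comp h1).rpow_const fun x => Or.inr (by positivity)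
    have hsm : StronglyMeasurable fun ξ : Fin N → ℝ =>
        ∫ τ, euclNorm ((F τ).mulVec ξ) ^ (2 * s) ∂(volume.restrict (Set.Ioc 0 t)) :=
      hgc.stronglyMeasurable.integral_prod_right' (ν := volume.restrict (Set.Ioc 0 t))
    have : (fun ξ => PsiFun Q B hQ s t ξ) = fun ξ : Fin N → ℝ =>
        ∫ τ, euclNorm ((F τ).mulVec ξ) ^ (2 * s) ∂(volume.restrict (Set.Ioc 0 t)) := by
      funext ξ
      rw [hPsi_eq, intervalIntegral.integral_of_le ht]
    rw [this]
    exact hsm.measurable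
  -- conclusion
  refine ⟨c, ⟨hcpos, hcle.trans (by norm_num)⟩, ?_⟩
  intro v hv t ht
  rcases eq_or_lt_of_le ht.1 with h0 | htpos
  · -- t = 0
    subst h0
    simp only [mul_zero, zero_div, sub_zero, Real.rpow_zero, Real.rpow_one, mul_one]
    have : ∀ ξ, PsiFun Q B hQ s 0 ξ = 0 := by
      intro ξ; rw [PsiFun, intervalIntegral.integral_same]
    simp [this]
  · -- 0 < t
    set θ : ℝ := c * t / T with hθ
    have hθpos : 0 < θ := div_pos (mul_pos hcpos htpos) hT
    have hθlt : θ < 1 := by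
      have h1 : θ ≤ c := by
        rw [hθ, div_le_iff₀ hT]
        nlinarith [ht.2]
      linarith [hcle]
    -- functions
    set V : (Fin N → ℝ) → ℝ := fun ξ => ‖v ξ‖ ^ 2 with hV
    set Wt : (Fin N → ℝ) → ℝ := fun ξ => ‖Real.exp (-(PsiFun Q B hQ s t ξ)) • v ξ‖ ^ 2 with hWt
    set WT : (Fin N → ℝ) → ℝ := fun ξ => ‖Real.exp (-(PsiFun Q B hQ s T ξ)) • v ξ‖ ^ 2 with hWT
    have hWt_eq : ∀ ξ, Wt ξ = Real.exp (-(PsiFun Q B hQ s t ξ)) ^ 2 * ‖v ξ‖ ^ 2 := by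
      intro ξ
      simp only [hWt]
      rw [norm_smul, mul_pow, Real.norm_eq_abs, abs_of_pos (Real.exp_pos _)]
    have hWT_eq : ∀ ξ, WT ξ = Real.exp (-(PsiFun Q B hQ s T ξ)) ^ 2 * ‖v ξ‖ ^ 2 := by
      intro ξ
      simp only [hWT]
      rw [norm_smul, mul_pow, Real.norm_eq_abs, abs_of_pos (Real.exp_pos _)]
    -- measurability
    have hVae : AEMeasurable V volume := hv.1.norm.aemeasurable.pow_const 2
    have hWtae : AEMeasurable Wt volume := by
      have : AEMeasurable (fun ξ => Real.exp (-(PsiFun Q B hQ s t ξ)) ^ 2) volume :=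
        ((Real.measurable_exp.comp ((hΨmeas t ht.1).neg)).pow_const 2).aemeasurable
      simp only [funext hWt_eq]
      exact this.mul hVae
    have hWTae : AEMeasurable WT volume := by
      have : AEMeasurable (fun ξ => Real.exp (-(PsiFun Q B hQ s T ξ)) ^ 2) volume :=
        ((Real.measurable_exp.comp ((hΨmeas T hT.le).neg)).pow_const 2).aemeasurable
      simp only [funext hWT_eq]
      exact this.mul hVae
    -- lintegrals
    set At : ENNReal := ∫⁻ ξ, ENNReal.ofReal (V ξ) with hAt
    set Bt : ENNReal := ∫⁻ ξ, ENNReal.ofReal (Wt ξ) with hBt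
    set BT : ENNReal := ∫⁻ ξ, ENNReal.ofReal (WT ξ) with hBT
    have hVint : Integrable V volume := by
      have := hv.integrable_norm_rpow (by norm_num) (by norm_num)
      simpa [hV, ENNReal.toReal_ofNat, Real.rpow_natCast] using this
    have hA_top : At ≠ ⊤ := hVint.lintegral_lt_top.ne
    have hWT_le_V : ∀ ξ, WT ξ ≤ V ξ := by
      intro ξ
      rw [hWT_eq, hV]
      have h1 : Real.exp (-(PsiFun Q B hQ s T ξ)) ≤ 1 := by
        rw [Real.exp_le_one_iff]
        simpa using hΨ_nonneg T ⟨hT.le, le_refl _⟩ ξ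
      have h2 : Real.exp (-(PsiFun Q B hQ s T ξ)) ^ 2 ≤ 1 :=
        pow_le_one₀ (Real.exp_pos _).le h1
      calc Real.exp (-(PsiFun Q B hQ s T ξ)) ^ 2 * ‖v ξ‖ ^ 2 ≤ 1 * ‖v ξ‖ ^ 2 :=
            mul_le_mul_of_nonneg_right h2 (sq_nonneg _)
        _ = ‖v ξ‖ ^ 2 := one_mul _
    have hBT_le : BT ≤ At := lintegral_mono fun ξ => ENNReal.ofReal_le_ofReal (hWT_le_V ξ)
    have hBT_top : BT ≠ ⊤ := (lt_of_le_of_lt hBT_le hA_top.lt_top).ne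
    -- Bochner = toReal of lintegral
    have hWt_nonneg : ∀ ξ, 0 ≤ Wt ξ := fun ξ => by rw [hWt]; positivity
    have hWT_nonneg : ∀ ξ, 0 ≤ WT ξ := fun ξ => by rw [hWT]; positivity
    have hV_nonneg : ∀ ξ, 0 ≤ V ξ := fun ξ => by rw [hV]; positivity
    have hIt : ∫ ξ, Wt ξ = Bt.toReal :=
      integral_eq_lintegral_of_nonneg_ae (Filter.Eventually.of_forall hWt_nonneg)
        hWtae.aestronglyMeasurable
    have hIT : ∫ ξ, WT ξ = BT.toReal :=
      integral_eq_lintegral_of_nonneg_ae (Filter.Eventually.of_forall hWT_nonneg)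
        hWTae.aestronglyMeasurable
    have hIV : ∫ ξ, V ξ = At.toReal :=
      integral_eq_lintegral_of_nonneg_ae (Filter.Eventually.of_forall hV_nonneg)
        hVae.aestronglyMeasurable
    -- pointwise interpolation inequality
    have hpt : ∀ ξ, ENNReal.ofReal (Wt ξ) ≤
        ENNReal.ofReal (V ξ) ^ (1 - θ) * ENNReal.ofReal (WT ξ) ^ θ := by
      intro ξ
      have hreal : Wt ξ ≤ V ξ ^ (1 - θ) * WT ξ ^ θ := by
        set a : ℝ := PsiFun Q B hQ s T ξ with ha
        have ha0 : 0 ≤ a := hΨ_nonneg T ⟨hT.le, le_refl _⟩ ξ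
        have hκ : θ * a ≤ PsiFun Q B hQ s t ξ := hKey t ht ξ
        have hvv : (0:ℝ) ≤ ‖v ξ‖ ^ 2 := by positivity
        have key1 : Real.exp (-(PsiFun Q B hQ s t ξ)) ^ 2 ≤ (Real.exp (-a) ^ 2) ^ θ := by
          have e1 : (Real.exp (-a) ^ 2) ^ θ = Real.exp (-(θ * a)) ^ 2 := by
            rw [sq, ← Real.exp_add, ← Real.exp_mul, sq, ← Real.exp_add]
            congr 1; ring
          rw [e1]
          have : Real.exp (-(PsiFun Q B hQ s t ξ)) ≤ Real.exp (-(θ * a)) := by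
            exact Real.exp_le_exp.2 (by linarith)
          exact pow_le_pow_left₀ (Real.exp_pos _).le this 2
        have e2 : V ξ ^ (1 - θ) * WT ξ ^ θ = (Real.exp (-a) ^ 2) ^ θ * ‖v ξ‖ ^ 2 := by
          rw [hWT_eq, hV, ← ha,
            Real.mul_rpow (by positivity) hvv]
          have e3 : (‖v ξ‖ ^ 2 : ℝ) ^ (1 - θ) * ((‖v ξ‖ ^ 2 : ℝ) ^ θ) = ‖v ξ‖ ^ 2 := by
            rw [← Real.rpow_add' hvv (by norm_num), sub_add_cancel, Real.rpow_one]
          calc (‖v ξ‖ ^ 2 : ℝ) ^ (1 - θ) * ((Real.exp (-a) ^ 2) ^ θ * (‖v ξ‖ ^ 2 : ℝ) ^ θ)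
              = (Real.exp (-a) ^ 2) ^ θ *
                  ((‖v ξ‖ ^ 2 : ℝ) ^ (1 - θ) * (‖v ξ‖ ^ 2 : ℝ) ^ θ) := by ring
            _ = (Real.exp (-a) ^ 2) ^ θ * ‖v ξ‖ ^ 2 := by rw [e3]
        rw [hWt_eq, e2]
        exact mul_le_mul_of_nonneg_right key1 hvv
      calc ENNReal.ofReal (Wt ξ) ≤ ENNReal.ofReal (V ξ ^ (1 - θ) * WT ξ ^ θ) :=
            ENNReal.ofReal_le_ofReal hreal
        _ = ENNReal.ofReal (V ξ) ^ (1 - θ) * ENNReal.ofReal (WT ξ) ^ θ := by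
            rw [ENNReal.ofReal_mul (Real.rpow_nonneg (hV_nonneg ξ) _),
              ENNReal.ofReal_rpow_of_nonneg (hV_nonneg ξ) (by linarith),
              ENNReal.ofReal_rpow_of_nonneg (hWT_nonneg ξ) hθpos.le]
    -- Hölder
    have hHolder : Bt ≤ At ^ (1 - θ) * BT ^ θ := by
      have hpq : Real.HolderConjugate (1 - θ)⁻¹ θ⁻¹ :=
        Real.HolderConjugate.one_sub_inv_inv hθpos hθlt
      have hf : AEMeasurable (fun ξ => ENNReal.ofReal (V ξ) ^ (1 - θ)) volume :=
        hVae.ennreal_ofReal.pow_const _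
      have hg : AEMeasurable (fun ξ => ENNReal.ofReal (WT ξ) ^ θ) volume :=
        hWTae.ennreal_ofReal.pow_const _
      have h1 := ENNReal.lintegral_mul_le_Lp_mul_Lq volume hpq hf hg
      have e1 : (∫⁻ ξ, (ENNReal.ofReal (V ξ) ^ (1 - θ)) ^ (1 - θ)⁻¹) ^ (1 / (1 - θ)⁻¹) =
          At ^ (1 - θ) := by
        have : ∀ ξ, (ENNReal.ofReal (V ξ) ^ (1 - θ)) ^ (1 - θ)⁻¹ = ENNReal.ofReal (V ξ) := by
          intro ξ
          rw [← ENNReal.rpow_mul, mul_inv_cancel₀ (by linarith), ENNReal.rpow_one]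
        simp only [this, one_div, inv_inv, hAt]
      have e2 : (∫⁻ ξ, (ENNReal.ofReal (WT ξ) ^ θ) ^ θ⁻¹) ^ (1 / θ⁻¹) = BT ^ θ := by
        have : ∀ ξ, (ENNReal.ofReal (WT ξ) ^ θ) ^ θ⁻¹ = ENNReal.ofReal (WT ξ) := by
          intro ξ
          rw [← ENNReal.rpow_mul, mul_inv_cancel₀ (ne_of_gt hθpos), ENNReal.rpow_one]
        simp only [this, one_div, inv_inv, hBT]
      calc Bt ≤ ∫⁻ ξ, ENNReal.ofReal (V ξ) ^ (1 - θ) * ENNReal.ofReal (WT ξ) ^ θ :=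
            lintegral_mono hpt
        _ ≤ _ := by rw [← e1, ← e2]; exact h1
    -- wrap up
    have hRHS_top : At ^ (1 - θ) * BT ^ θ ≠ ⊤ :=
      (ENNReal.mul_lt_top
        (ENNReal.rpow_lt_top_of_nonneg (by linarith) hA_top)
        (ENNReal.rpow_lt_top_of_nonneg hθpos.le hBT_top)).ne
    have hmain : Bt.toReal ≤ At.toReal ^ (1 - θ) * BT.toReal ^ θ := by
      have := ENNReal.toReal_mono hRHS_top hHolder
      rwa [ENNReal.toReal_mul, ← ENNReal.toReal_rpow, ← ENNReal.toReal_rpow] at this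
    have hgoal : Bt.toReal ^ ((1:ℝ)/2) ≤
        (At.toReal ^ ((1:ℝ)/2)) ^ (1 - θ) * (BT.toReal ^ ((1:ℝ)/2)) ^ θ := by
      have h2 : Bt.toReal ^ ((1:ℝ)/2) ≤
          (At.toReal ^ (1 - θ) * BT.toReal ^ θ) ^ ((1:ℝ)/2) :=
        Real.rpow_le_rpow ENNReal.toReal_nonneg hmain (by norm_num)
      refine h2.trans_eq ?_
      rw [Real.mul_rpow (Real.rpow_nonneg ENNReal.toReal_nonneg _)
        (Real.rpow_nonneg ENNReal.toReal_nonneg _),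
        ← Real.rpow_mul ENNReal.toReal_nonneg, ← Real.rpow_mul ENNReal.toReal_nonneg,
        ← Real.rpow_mul ENNReal.toReal_nonneg, ← Real.rpow_mul ENNReal.toReal_nonneg,
        mul_comm (1 - θ) ((1:ℝ)/2), mul_comm θ ((1:ℝ)/2)]
    calc (∫ ξ, ‖Real.exp (-(PsiFun Q B hQ s t ξ)) • v ξ‖ ^ 2) ^ ((1:ℝ)/2)
        = Bt.toReal ^ ((1:ℝ)/2) := by rw [← hIt]
      _ ≤ (At.toReal ^ ((1:ℝ)/2)) ^ (1 - θ) * (BT.toReal ^ ((1:ℝ)/2)) ^ θ := hgoal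
      _ = ((∫ ξ, ‖v ξ‖ ^ 2) ^ ((1:ℝ)/2)) ^ (1 - c * t / T) *
            ((∫ ξ, ‖Real.exp (-(PsiFun Q B hQ s T ξ)) • v ξ‖ ^ 2) ^ ((1:ℝ)/2)) ^
              (c * t / T) := by rw [← hIV, ← hIT]

end Aux
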